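/- arXiv:1402.2815 — 2 statements merged into one kernel-verified Lean document; each statement's English description precedes it below -/
import Mathlib

section
/- Let C > 0 and W > 0 be real numbers, and let w_k, w_j be reals with 0 < w_k ≤ C, w_j ≥ 2C, and 8·w_k·w_j < W. Then (w_k·w_j)/W < 1 − (1 − 2·w_k·C/W)^{2·⌊w_j/C⌋}. -/
/-- **Inequality (3.9).** The probability that a vertex of weight `wk` is adjacent to a heavy
vertex of weight `wj ≥ 2C` in the Chung-Lu graph with total weight `W` is strictly smaller
than the probability that it is adjacent to at least one of `2⌊wj/C⌋` independent copies of
weight `2C` (provided `8 wk wj < W`). -/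
theorem copies_domination
    (C W wk wj : ℝ) (hC : 0 < C) (hW : 0 < W)
    (hwk : 0 < wk) (hwkC : wk ≤ C) (hwj : 2 * C ≤ wj) (h8 : 8 * wk * wj < W) :
    wk * wj / W < 1 - (1 - 2 * wk * C / W) ^ (2 * (⌊wj / C⌋).toNat) := by
  set p : ℝ := 2 * wk * C / W with hp
  have hwjpos : 0 < wj := by linarith
  have hp0 : 0 < p := by positivity
  have hp1 : p < 1 := by
    rw [hp, div_lt_one hW]; nlinarith
  have h2 : (2:ℝ) ≤ wj / C := by rw [le_div_iff₀ hC]; linarith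
  have hfl : (0:ℤ) ≤ ⌊wj / C⌋ := Int.floor_nonneg.2 (by linarith)
  set n := (⌊wj / C⌋).toNat with hn
  have hncast : ((n:ℤ) : ℝ) = (⌊wj / C⌋ : ℝ) := by
    rw [hn, Int.toNat_of_nonneg hfl]
  have hn1 : (n:ℝ) ≤ wj / C := by
    have := Int.floor_le (wj / C)
    push_cast at hncast ⊢
    linarith [hncast ▸ this]
  have hn2 : wj / C - 1 < (n:ℝ) := by
    have := Int.sub_one_lt_floor (wj / C)
    push_cast at hncast ⊢
    linarith [hncast ▸ this]
  have hnC1 : (n:ℝ) * C ≤ wj := (le_div_iff₀ hC).1 hn1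
  have hnC2 : wj - C < (n:ℝ) * C := by
    have : wj / C < (n:ℝ) + 1 := by linarith
    have := (div_lt_iff₀ hC).1 this
    nlinarith
  -- the key power bound
  have hb : 1 + ((2*n : ℕ):ℝ) * p ≤ (1 + p) ^ (2*n) :=
    one_add_mul_le_pow (by linarith) (2*n)
  have hmul : (1 - p) ^ (2*n) * (1 + p) ^ (2*n) ≤ 1 := by
    rw [← mul_pow]
    have h : (1 - p) * (1 + p) = 1 - p^2 := by ring
    rw [h]
    exact pow_le_one₀ (by nlinarith) (by nlinarith)
  have hpos : (0:ℝ) < 1 + ((2*n:ℕ):ℝ) * p := by positivity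
  have hkey : (1 - p) ^ (2*n) ≤ 1 / (1 + ((2*n:ℕ):ℝ) * p) := by
    rw [le_div_iff₀ hpos]
    calc (1 - p) ^ (2*n) * (1 + ((2*n:ℕ):ℝ) * p)
        ≤ (1 - p) ^ (2*n) * (1 + p) ^ (2*n) := by
          apply mul_le_mul_of_nonneg_left hb (pow_nonneg (by linarith) _)
      _ ≤ 1 := hmul
  set A : ℝ := wk * wj / W with hA
  have hA0 : 0 < A := by positivity
  have hA8 : A * 8 < 1 := by
    rw [hA, div_mul_eq_mul_div, div_lt_one hW]; linarith
  set t : ℝ := ((2*n:ℕ):ℝ) * p with ht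
  have htcast : t = 2 * (n:ℝ) * p := by rw [ht]; push_cast; ring
  have ht2 : 2 * A < t := by
    rw [htcast, hp, hA]
    calc 2 * (wk * wj / W) = 2 * (wk * wj) / W := by ring
      _ < 2 * (n:ℝ) * (2 * wk * C) / W := by
          rw [div_lt_div_iff₀ hW hW]
          have hwj2 : wj < 2 * ((n:ℝ) * C) := by linarith
          nlinarith [mul_lt_mul_of_pos_left hwj2 (by positivity : (0:ℝ) < 2 * wk * W)]
      _ = 2 * (n:ℝ) * (2 * wk * C / W) := by ring
  have ht12 : t ≤ 1/2 := by
    rw [htcast, hp]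
    have hstep : (4 * (n:ℝ) * wk * C) / W ≤ 1/2 := by
      rw [div_le_iff₀ hW]
      nlinarith [mul_le_mul_of_nonneg_left hnC1 hwk.le]
    calc 2 * (n:ℝ) * (2 * wk * C / W) = (4 * (n:ℝ) * wk * C) / W := by ring
      _ ≤ 1/2 := hstep
  have hfin : A < 1 - 1 / (1 + t) := by
    have h1t : (0:ℝ) < 1 + t := by linarith
    have hAt : A * t ≤ A * (1/2) := mul_le_mul_of_nonneg_left ht12 hA0.le
    have hexp : (1 - A) * (1 + t) = 1 + t - A - A * t := by ring
    have key : 1 < (1 - A) * (1 + t) := by rw [hexp]; linarith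
    have h2' : 1 / (1 + t) < 1 - A := by rw [div_lt_iff₀ h1t]; linarith [key]
    linarith
  calc A < 1 - 1 / (1 + t) := hfin
    _ ≤ 1 - (1 - p) ^ (2*n) := by linarith [hkey]
end

section
/- In the setting of the ODE system of the sequential-exposure process, suppose additionally that ν and μ_U are differentiable functions satisfying ν'(τ) = −1 + G(τ)·Σ_{i=1}^{p_ℓ} (W_i/d)·γ_{i,r−1}(τ) and μ_U'(τ) = −G(τ) + G(τ)·Σ_{i=1}^{p_ℓ} (W_i²/d)·γ_{i,r−1}(τ), with initial conditions ν(0) = p(1−γ) + γ', μ_U(0) = W'_γ + p·Σ_{i=1}^{p_ℓ} W_i γ_i, γ_{i,0}(0) = (1−p)γ_i and γ_{i,j}(0) = 0 for 1 ≤ j ≤ r−1. Then for all τ ≥ 0: ν(τ) = p(1−γ) + γ' − τ + (1−p)·Σ_{i=1}^{p_ℓ} γ_i·ψ_r(W_i·I(τ)/d), and μ_U(τ) = W'_γ + p·Σ_{i=1}^{p_ℓ} W_i γ_i − I(τ) + (1−p)·Σ_{i=1}^{p_ℓ} W_i γ_i·ψ_r(W_i·I(τ)/d). -/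
open MeasureTheory Filter

noncomputable section

/-- `psi r x` is the probability that a Poisson random variable with mean `x` is at least `r`. -/
def psi (r : ℕ) (x : ℝ) : ℝ :=
  ∑' j : ℕ, if r ≤ j then Real.exp (-x) * x ^ j / (Nat.factorial j : ℝ) else 0

lemma summable_poisson (x : ℝ) :
    Summable (fun j : ℕ => Real.exp (-x) * x ^ j / (Nat.factorial j : ℝ)) := by
  have := (Real.summable_pow_div_factorial x).mul_left (Real.exp (-x))
  simpa [mul_div_assoc] using this

lemma tsum_poisson (x : ℝ) :
    ∑' j : ℕ, Real.exp (-x) * x ^ j / (Nat.factorial j : ℝ) = 1 := by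
  have h1 : ∑' j : ℕ, (x ^ j / (Nat.factorial j : ℝ)) = Real.exp x := by
    rw [Real.exp_eq_exp_ℝ, NormedSpace.exp_eq_tsum_div]
  calc ∑' j : ℕ, Real.exp (-x) * x ^ j / (Nat.factorial j : ℝ)
      = Real.exp (-x) * ∑' j : ℕ, (x ^ j / (Nat.factorial j : ℝ)) := by
        rw [← tsum_mul_left]; simp [mul_div_assoc]
    _ = 1 := by rw [h1, ← Real.exp_add]; simp

lemma psi_eq (r : ℕ) (x : ℝ) :
    psi r x = 1 - ∑ j ∈ Finset.range r, Real.exp (-x) * x ^ j / (Nat.factorial j : ℝ) := by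
  set f : ℕ → ℝ := fun j => Real.exp (-x) * x ^ j / (Nat.factorial j : ℝ) with hf
  have hsum : Summable f := summable_poisson x
  have hfin : ∀ j ∉ Finset.range r, (if j < r then f j else 0) = 0 := by
    intro j hj
    simp only [Finset.mem_range] at hj
    simp [hj]
  have hsum2 : Summable (fun j : ℕ => if j < r then f j else 0) :=
    summable_of_ne_finset_zero hfin
  have key : (fun j : ℕ => if r ≤ j then f j else 0)
      = fun j => f j - (if j < r then f j else 0) := by
    funext j
    by_cases h : r ≤ j
    · simp [h, not_lt.mpr h]
    · simp [h, lt_of_not_ge h]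
  have : psi r x = ∑' j : ℕ, (f j - (if j < r then f j else 0)) := by
    rw [psi, key]
  rw [this, Summable.tsum_sub hsum hsum2, tsum_poisson x, tsum_eq_sum hfin]
  congr 1
  refine Finset.sum_congr rfl fun j hj => ?_
  simp only [Finset.mem_range] at hj
  simp [hj]

lemma psi_zero {r : ℕ} (hr : 1 ≤ r) : psi r 0 = 0 := by
  rw [psi_eq]
  rw [Finset.sum_eq_single 0]
  · simp
  · intro j hj hj0
    simp [zero_pow hj0]
  · intro h
    exact absurd (Finset.mem_range.mpr hr) h

lemma hasDerivAt_psi (r : ℕ) (hr : 1 ≤ r) (x : ℝ) :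
    HasDerivAt (psi r) (Real.exp (-x) * x ^ (r - 1) / (Nat.factorial (r - 1) : ℝ)) x := by
  have hpsi : psi r = fun y =>
      1 - ∑ j ∈ Finset.range r, Real.exp (-y) * y ^ j / (Nat.factorial j : ℝ) :=
    funext fun y => psi_eq r y
  rw [hpsi]
  clear hpsi
  induction r, hr using Nat.le_induction with
  | base =>
    have hexp : HasDerivAt (fun y : ℝ => Real.exp (-y)) (-Real.exp (-x)) x := by
      simpa using (hasDerivAt_neg x).exp
    have := hexp.const_sub 1
    convert this using 1
    · rfl
    · rfl
    · funext y; simp [Finset.sum_range_one]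
    · simp
  | succ n hn ih =>
    have hexp : HasDerivAt (fun y : ℝ => Real.exp (-y)) (-Real.exp (-x)) x := by
      simpa using (hasDerivAt_neg x).exp
    have hterm : HasDerivAt (fun y : ℝ => Real.exp (-y) * y ^ n / (Nat.factorial n : ℝ))
        ((-Real.exp (-x) * x ^ n + Real.exp (-x) * ((n : ℝ) * x ^ (n - 1)))
          / (Nat.factorial n : ℝ)) x :=
      (hexp.mul (hasDerivAt_pow n x)).div_const _
    have hsum := ih.fun_sub hterm
    have heq : (fun y : ℝ =>
        (1 - ∑ j ∈ Finset.range n, Real.exp (-y) * y ^ j / (Nat.factorial j : ℝ))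
          - Real.exp (-y) * y ^ n / (Nat.factorial n : ℝ))
        = fun y => 1 - ∑ j ∈ Finset.range (n + 1),
            Real.exp (-y) * y ^ j / (Nat.factorial j : ℝ) := by
      funext y
      rw [Finset.sum_range_succ]
      ring
    rw [heq] at hsum
    convert hsum using 1
    · rfl
    · rfl
    have hfac : (n : ℝ) * (Nat.factorial (n - 1) : ℝ) = (Nat.factorial n : ℝ) := by
      exact_mod_cast Nat.mul_factorial_pred (by omega)
    have hn1 : n - 1 + 1 = n := by omega
    have hpow : x ^ (n - 1) * x = x ^ n := by
      rw [← pow_succ, hn1]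
    have hfn : (Nat.factorial n : ℝ) ≠ 0 := by exact_mod_cast Nat.factorial_ne_zero n
    have hfn1 : (Nat.factorial (n - 1) : ℝ) ≠ 0 := by exact_mod_cast Nat.factorial_ne_zero (n - 1)
    simp only [Nat.add_sub_cancel]
    field_simp
    rw [← hfac]
    rw [← hpow]
    ring

lemma eq_of_hasDerivAt_zero {f : ℝ → ℝ} (h : ∀ t, HasDerivAt f 0 t) (t : ℝ) : f t = f 0 :=
  is_const_of_deriv_eq_zero (fun x => (h x).differentiableAt)
    (fun x => (h x).deriv) t 0

/-- Explicit solution of the triangular ODE system. -/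
lemma ode_sol (m : ℕ) (c : ℝ) (u u' : ℝ → ℝ)
    (hu : ∀ τ, HasDerivAt u (u' τ) τ) (hu0 : u 0 = 0)
    (g : ℕ → ℝ → ℝ)
    (h0 : ∀ τ, HasDerivAt (g 0) (-(g 0 τ) * u' τ) τ)
    (hj : ∀ j, 1 ≤ j → j ≤ m → ∀ τ, HasDerivAt (g j) ((g (j - 1) τ - g j τ) * u' τ) τ)
    (hg00 : g 0 0 = c) (hgj0 : ∀ j, 1 ≤ j → j ≤ m → g j 0 = 0) :
    ∀ j ≤ m, ∀ τ, g j τ = c * Real.exp (-u τ) * u τ ^ j / (Nat.factorial j : ℝ) := by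
  intro j
  induction j with
  | zero =>
    intro _ τ
    have hexpu : ∀ s, HasDerivAt (fun t => Real.exp (u t)) (Real.exp (u s) * u' s) s :=
      fun s => (Real.hasDerivAt_exp (u s)).comp s (hu s)
    have hconst : ∀ s, HasDerivAt (fun t => g 0 t * Real.exp (u t)) 0 s := by
      intro s
      have := (h0 s).fun_mul (hexpu s)
      convert this using 1
      · rfl
      · rfl
      ring
    have := eq_of_hasDerivAt_zero hconst τ
    simp only [hu0, Real.exp_zero, mul_one, hg00] at this
    have hne : Real.exp (u τ) ≠ 0 := Real.exp_ne_zero _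
    simp only [pow_zero, mul_one, Nat.factorial_zero, Nat.cast_one, div_one]
    rw [← this, Real.exp_neg]
    field_simp
  | succ n ihn =>
    intro hnm τ
    have ih := ihn (by omega)
    have hexpu : ∀ s, HasDerivAt (fun t => Real.exp (u t)) (Real.exp (u s) * u' s) s :=
      fun s => (Real.hasDerivAt_exp (u s)).comp s (hu s)
    have hconst : ∀ s, HasDerivAt
        (fun t => g (n + 1) t * Real.exp (u t)
          - c * u t ^ (n + 1) / (Nat.factorial (n + 1) : ℝ)) 0 s := by
      intro s
      have hd1 := (hj (n + 1) (by omega) hnm s).fun_mul (hexpu s)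
      have hd2 : HasDerivAt (fun t => c * u t ^ (n + 1) / (Nat.factorial (n + 1) : ℝ))
          (c * (((n : ℝ) + 1) * u s ^ n * u' s) / (Nat.factorial (n + 1) : ℝ)) s := by
        have := ((hu s).pow (n + 1)).const_mul c
        simpa using this.div_const _
      have := hd1.fun_sub hd2
      convert this using 1
      · rfl
      · rfl
      have hgs : g n s = c * Real.exp (-u s) * u s ^ n / (Nat.factorial n : ℝ) := ih s
      simp only [Nat.add_sub_cancel, hgs]
      have hfac : ((Nat.factorial (n + 1) : ℝ)) = ((n : ℝ) + 1) * (Nat.factorial n : ℝ) := by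
        exact_mod_cast Nat.factorial_succ n
      have hfe : Real.exp (-u s) * Real.exp (u s) = 1 := by
        rw [← Real.exp_add]; simp
      have hfn : (Nat.factorial n : ℝ) ≠ 0 := by exact_mod_cast Nat.factorial_ne_zero n
      simp only [Nat.add_sub_cancel, hgs, hfac, Real.exp_neg]
      field_simp
      ring
    have := eq_of_hasDerivAt_zero hconst τ
    simp only [hu0, Real.exp_zero, mul_one, hgj0 (n + 1) (by omega) hnm,
      zero_pow (Nat.succ_ne_zero n), mul_zero, zero_div, sub_zero, zero_sub] at this
    have hne : Real.exp (u τ) ≠ 0 := Real.exp_ne_zero _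
    have h2 : g (n + 1) τ * Real.exp (u τ) = c * u τ ^ (n + 1) / (Nat.factorial (n + 1) : ℝ) := by
      linarith [this]
    have : g (n + 1) τ = c * u τ ^ (n + 1) / (Nat.factorial (n + 1) : ℝ) * Real.exp (-u τ) := by
      rw [← h2, Real.exp_neg]
      field_simp
    rw [this]
    ring

/-- **Proposition 4.2.** Explicit solution for `ν` and `μ_U` in the limiting system of
differential equations of the sequential-exposure process:
`ν(τ) = p(1−γ) + γ' − τ + (1−p)·Σ_i γ_i ψ_r(W_i I(τ)/d)` and
`μ_U(τ) = W'_γ + p Σ_i W_i γ_i − I(τ) + (1−p)·Σ_i W_i γ_i ψ_r(W_i I(τ)/d)`. -/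
theorem nu_muU_solution
    (r pℓ : ℕ) (hr : 2 ≤ r) (hpℓ : 1 ≤ pℓ)
    (W : Fin pℓ → ℝ) (hW : ∀ i, 0 < W i) (d : ℝ) (hd : 0 < d)
    (γc : Fin pℓ → ℝ) (hγc : ∀ i, 0 < γc i)
    (γ γ' W'γ p : ℝ) (hγ0 : 0 ≤ γ) (hγ'0 : 0 ≤ γ') (hW'γ : 0 ≤ W'γ)
    (hp0 : 0 ≤ p) (hp1 : p < 1)
    (G : ℝ → ℝ) (hG : Continuous G)
    (γf : Fin pℓ → ℕ → ℝ → ℝ) (ν μU : ℝ → ℝ)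
    (hder0 : ∀ i, ∀ τ : ℝ, HasDerivAt (γf i 0) (-(γf i 0 τ) * (W i / d) * G τ) τ)
    (hderj : ∀ i, ∀ j : ℕ, 1 ≤ j → j ≤ r - 1 → ∀ τ : ℝ,
      HasDerivAt (γf i j) ((γf i (j - 1) τ - γf i j τ) * (W i / d) * G τ) τ)
    (hν' : ∀ τ : ℝ, HasDerivAt ν (-1 + G τ * ∑ i, (W i / d) * γf i (r - 1) τ) τ)
    (hμU' : ∀ τ : ℝ, HasDerivAt μU (-(G τ) + G τ * ∑ i, (W i ^ 2 / d) * γf i (r - 1) τ) τ)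
    (hν0 : ν 0 = p * (1 - γ) + γ')
    (hμU0 : μU 0 = W'γ + p * ∑ i, W i * γc i)
    (hγf00 : ∀ i, γf i 0 0 = (1 - p) * γc i)
    (hγfj0 : ∀ i, ∀ j : ℕ, 1 ≤ j → j ≤ r - 1 → γf i j 0 = 0) :
    ∀ τ : ℝ, 0 ≤ τ →
      ν τ = p * (1 - γ) + γ' - τ
          + (1 - p) * ∑ i, γc i * psi r (W i * (∫ s in (0:ℝ)..τ, G s) / d) ∧
      μU τ = W'γ + p * (∑ i, W i * γc i) - (∫ s in (0:ℝ)..τ, G s)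
          + (1 - p) * ∑ i, W i * γc i * psi r (W i * (∫ s in (0:ℝ)..τ, G s) / d) := by
  intro τ hτ
  -- the antiderivative of G
  set I : ℝ → ℝ := fun t => ∫ s in (0:ℝ)..t, G s with hIdef
  have hI : ∀ t, HasDerivAt I (G t) t := fun t =>
    intervalIntegral.integral_hasDerivAt_right (hG.intervalIntegrable _ _)
      (hG.stronglyMeasurableAtFilter _ _) hG.continuousAt
  have hI0 : I 0 = 0 := intervalIntegral.integral_same
  set u : Fin pℓ → ℝ → ℝ := fun i t => W i * I t / d with hudef
  have hu : ∀ i t, HasDerivAt (u i) (W i / d * G t) t := by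
    intro i t
    have := ((hI t).const_mul (W i)).div_const d
    convert this using 1
    · rfl
    · rfl
    ring
  have hu0 : ∀ i, u i 0 = 0 := by
    intro i; simp [hudef, hI0]
  -- explicit solution of the γ system
  have key : ∀ i, ∀ j ≤ r - 1, ∀ t,
      γf i j t = (1 - p) * γc i * Real.exp (-u i t) * u i t ^ j / (Nat.factorial j : ℝ) := by
    intro i
    refine ode_sol (r - 1) ((1 - p) * γc i) (u i) (fun t => W i / d * G t)
      (hu i) (hu0 i) (γf i) ?_ ?_ (hγf00 i) (hγfj0 i)
    · intro t
      have := hder0 i t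
      convert this using 1
      ring
    · intro j hj1 hjr t
      have := hderj i j hj1 hjr t
      convert this using 1
      ring
  have hr1 : 1 ≤ r := by omega
  -- derivative of the composed psi terms
  have hpsiD : ∀ i t, HasDerivAt (fun s => psi r (u i s))
      (Real.exp (-u i t) * u i t ^ (r - 1) / (Nat.factorial (r - 1) : ℝ)
        * (W i / d * G t)) t :=
    fun i t => (hasDerivAt_psi r hr1 (u i t)).comp t (hu i t)
  -- solution for ν
  set Φ : ℝ → ℝ := fun t => p * (1 - γ) + γ' - t + (1 - p) * ∑ i, γc i * psi r (u i t)
    with hΦdef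
  have hΦ' : ∀ t, HasDerivAt Φ (-1 + G t * ∑ i, (W i / d) * γf i (r - 1) t) t := by
    intro t
    have hsum : HasDerivAt (fun s => ∑ i, γc i * psi r (u i s))
        (∑ i, γc i * (Real.exp (-u i t) * u i t ^ (r - 1) / (Nat.factorial (r - 1) : ℝ)
          * (W i / d * G t))) t :=
      HasDerivAt.fun_sum fun i _ => (hpsiD i t).const_mul (γc i)
    have h1 : HasDerivAt (fun s : ℝ => p * (1 - γ) + γ' - s) (-1) t := by
      simpa using (hasDerivAt_id t).const_sub (p * (1 - γ) + γ')
    have := h1.fun_add (hsum.const_mul (1 - p))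
    convert this using 1
    · rfl
    · rfl
    have : (1 - p) * ∑ i, γc i * (Real.exp (-u i t) * u i t ^ (r - 1)
        / (Nat.factorial (r - 1) : ℝ) * (W i / d * G t))
        = G t * ∑ i, (W i / d) * γf i (r - 1) t := by
      rw [Finset.mul_sum, Finset.mul_sum]
      refine Finset.sum_congr rfl fun i _ => ?_
      rw [key i (r - 1) le_rfl t]
      ring
    rw [this]
  have hν2 : ∀ t, HasDerivAt (fun s => ν s - Φ s) 0 t := by
    intro t
    simpa using (hν' t).fun_sub (hΦ' t)
  have hΦ0 : Φ 0 = p * (1 - γ) + γ' := by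
    have : ∀ i : Fin pℓ, γc i * psi r (u i 0) = 0 := by
      intro i; rw [hu0 i, psi_zero hr1, mul_zero]
    simp [hΦdef, Finset.sum_congr rfl fun i _ => this i]
  have hν3 : ν τ = Φ τ := by
    have h := eq_of_hasDerivAt_zero hν2 τ
    rw [hν0, hΦ0] at h
    linarith
  -- solution for μU
  set Ψ : ℝ → ℝ := fun t => W'γ + p * (∑ i, W i * γc i) - I t
      + (1 - p) * ∑ i, W i * γc i * psi r (u i t) with hΨdef
  have hΨ' : ∀ t, HasDerivAt Ψ (-(G t) + G t * ∑ i, (W i ^ 2 / d) * γf i (r - 1) t) t := by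
    intro t
    have hsum : HasDerivAt (fun s => ∑ i, W i * γc i * psi r (u i s))
        (∑ i, W i * γc i * (Real.exp (-u i t) * u i t ^ (r - 1) / (Nat.factorial (r - 1) : ℝ)
          * (W i / d * G t))) t :=
      HasDerivAt.fun_sum fun i _ => (hpsiD i t).const_mul (W i * γc i)
    have h1 : HasDerivAt (fun s : ℝ => W'γ + p * (∑ i, W i * γc i) - I s) (-(G t)) t := by
      simpa using (hI t).const_sub (W'γ + p * (∑ i, W i * γc i))
    have := h1.fun_add (hsum.const_mul (1 - p))
    convert this using 1
    · rfl
    · rfl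
    have : (1 - p) * ∑ i, W i * γc i * (Real.exp (-u i t) * u i t ^ (r - 1)
        / (Nat.factorial (r - 1) : ℝ) * (W i / d * G t))
        = G t * ∑ i, (W i ^ 2 / d) * γf i (r - 1) t := by
      rw [Finset.mul_sum, Finset.mul_sum]
      refine Finset.sum_congr rfl fun i _ => ?_
      rw [key i (r - 1) le_rfl t]
      ring
    rw [this]
  have hμ2 : ∀ t, HasDerivAt (fun s => μU s - Ψ s) 0 t := by
    intro t
    simpa using (hμU' t).fun_sub (hΨ' t)
  have hΨ0 : Ψ 0 = W'γ + p * ∑ i, W i * γc i := by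
    have : ∀ i : Fin pℓ, W i * γc i * psi r (u i 0) = 0 := by
      intro i; rw [hu0 i, psi_zero hr1, mul_zero]
    simp [hΨdef, hI0, Finset.sum_congr rfl fun i _ => this i]
  have hμ3 : μU τ = Ψ τ := by
    have h := eq_of_hasDerivAt_zero hμ2 τ
    rw [hμU0, hΨ0] at h
    linarith
  constructor
  · rw [hν3, hΦdef]
  · rw [hμ3, hΨdef]
end
end
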